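/- arXiv:gr-qc/0111108 — 2 statements merged into one kernel-verified Lean document; each statement's English description precedes it below -/
import Mathlib

section
/- Let m ∈ ℕ, ρ ∈ ℝ, N ∈ ℕ with N ≥ 1, and let u be a tempered distribution on ℝ^m that scales almost homogeneously with degree ρ, i.e. S_ρ^N u = 0. Then the Fourier transform û of u scales almost homogeneously with degree m − ρ, i.e. S_{m−ρ}^N û = 0. -/
/-!
STATEMENT 0: If a tempered distribution `u` on `ℝ^m` satisfies `S_ρ^N u = 0` (almost
homogeneous scaling of degree `ρ`), then its Fourier transform satisfies
`S_{m-ρ}^N û = 0`.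
-/

open SchwartzMap

noncomputable section

/-- Multiplication by the `i`-th coordinate function, as a continuous linear map on
Schwartz space over `ℝ^m`. -/
def coordMulCLM (m : ℕ) (i : Fin m) :
    𝓢(EuclideanSpace ℝ (Fin m), ℂ) →L[ℝ] 𝓢(EuclideanSpace ℝ (Fin m), ℂ) :=
  SchwartzMap.bilinLeftCLM ((ContinuousLinearMap.lsmul ℝ ℝ : ℝ →L[ℝ] ℂ →L[ℝ] ℂ).flip)
    (EuclideanSpace.proj (𝕜 := ℝ) i).hasTemperateGrowth

/-- The scaling (Euler) operator `S_ρ` on tempered distributions: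
`(S_ρ u)(f) = ρ·u(f) − Σ_i u(∂_i(x_i f))`. -/
def eulerOp (m : ℕ) (ρ : ℝ) (u : 𝓢(EuclideanSpace ℝ (Fin m), ℂ) →L[ℝ] ℂ) :
    𝓢(EuclideanSpace ℝ (Fin m), ℂ) →L[ℝ] ℂ :=
  ρ • u - ∑ i : Fin m,
    u.comp ((LineDeriv.lineDerivOpCLM ℝ 𝓢(EuclideanSpace ℝ (Fin m), ℂ) (EuclideanSpace.single i (1 : ℝ))).comp (coordMulCLM m i))

open MeasureTheory Real Complex
open scoped FourierTransform

lemma coordMulCLM_coe (m : ℕ) (i : Fin m) (f : 𝓢(EuclideanSpace ℝ (Fin m), ℂ)) :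
    ⇑(coordMulCLM m i f) = fun x => (x i) • f x := rfl

lemma key (m : ℕ) (i : Fin m) (f : 𝓢(EuclideanSpace ℝ (Fin m), ℂ)) :
    fourierTransformCLM ℝ (LineDeriv.lineDerivOpCLM ℝ 𝓢(EuclideanSpace ℝ (Fin m), ℂ) (EuclideanSpace.single i (1:ℝ)) (coordMulCLM m i f))
      + LineDeriv.lineDerivOpCLM ℝ 𝓢(EuclideanSpace ℝ (Fin m), ℂ) (EuclideanSpace.single i (1:ℝ))
          (coordMulCLM m i (fourierTransformCLM ℝ f))
      = fourierTransformCLM ℝ f := by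
  set e : EuclideanSpace ℝ (Fin m) := EuclideanSpace.single i (1:ℝ) with he
  set g : 𝓢(EuclideanSpace ℝ (Fin m), ℂ) := coordMulCLM m i f with hg
  have hgcoe : ⇑g = fun x => (x i) • f x := rfl
  have hgint : Integrable (fderiv ℝ ⇑g) volume := by
    have : ⇑(fderivCLM ℝ (EuclideanSpace ℝ (Fin m)) ℂ g) = fderiv ℝ ⇑g := funext (fderivCLM_apply ℝ _)
    rw [← this]; exact (fderivCLM ℝ (EuclideanSpace ℝ (Fin m)) ℂ g).integrable
  have hf1 : Integrable (fun v : EuclideanSpace ℝ (Fin m) => ‖v‖ * ‖f v‖) volume := by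
    simpa using f.integrable_pow_mul volume 1
  ext k
  -- value of each side
  have hA : 𝓕 (⇑(LineDeriv.lineDerivOpCLM ℝ 𝓢(EuclideanSpace ℝ (Fin m), ℂ) e g)) k
      = VectorFourier.fourierSMulRight (-(innerSL ℝ)) (𝓕 ⇑g) k e := by
    have hpc : ⇑(LineDeriv.lineDerivOpCLM ℝ 𝓢(EuclideanSpace ℝ (Fin m), ℂ) e g) = fun x => fderiv ℝ ⇑g x e := funext (SchwartzMap.lineDerivOp_apply_eq_fderiv e g)
    rw [hpc, ← Real.fourier_continuousLinearMap_apply hgint,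
      Real.fourier_fderiv g.integrable g.differentiable hgint]
  -- derivative of the Fourier transform
  have hDF : HasFDerivAt (𝓕 ⇑f)
      (𝓕 (VectorFourier.fourierSMulRight (innerSL ℝ) ⇑f) k) k :=
    Real.hasFDerivAt_fourier f.integrable hf1 k
  have hsint : Integrable (fun v => VectorFourier.fourierSMulRight (innerSL ℝ) (⇑f) v) volume := by
    refine ((hf1.const_mul (2 * π * ‖(innerSL ℝ (E := EuclideanSpace ℝ (Fin m)))‖)).mono'
      (f.continuous.aestronglyMeasurable.fourierSMulRight (L := innerSL ℝ)) (ae_of_all _ fun v => ?_))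
    simpa [mul_assoc] using VectorFourier.norm_fourierSMulRight_le (innerSL ℝ) (⇑f) v
  have hDFe : 𝓕 (VectorFourier.fourierSMulRight (innerSL ℝ) ⇑f) k e
      = (-(2 * π * Complex.I)) • 𝓕 ⇑g k := by
    rw [Real.fourier_continuousLinearMap_apply hsint]
    have : (fun x => VectorFourier.fourierSMulRight (innerSL ℝ) (⇑f) x e)
        = ⇑((-(2 * π * Complex.I) : ℂ) • (g : 𝓢(EuclideanSpace ℝ (Fin m), ℂ))) := by
      funext x
      have hxi : ((innerSL ℝ) x) (EuclideanSpace.single i (1:ℝ)) = x i := by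
        simp [EuclideanSpace.inner_single_right]
      simp only [VectorFourier.fourierSMulRight_apply, he, hxi,
        SchwartzMap.smul_apply, hgcoe, real_smul, smul_eq_mul]
    rw [this]
    have := map_smul (fourierTransformCLM ℂ (V := EuclideanSpace ℝ (Fin m)) (E := ℂ))
      ((-(2 * π * Complex.I) : ℂ)) g
    calc 𝓕 ⇑((-(2 * π * Complex.I) : ℂ) • g) k
        = (fourierTransformCLM ℂ ((-(2 * π * Complex.I) : ℂ) • g)) k := rfl
      _ = (((-(2 * π * Complex.I) : ℂ)) • fourierTransformCLM ℂ g) k := by rw [this]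
      _ = (-(2 * π * Complex.I)) • 𝓕 ⇑g k := rfl
  have hB : fderiv ℝ (fun y : EuclideanSpace ℝ (Fin m) => (y i) • 𝓕 ⇑f y) k e
      = (k i) • ((-(2 * π * Complex.I)) • 𝓕 ⇑g k) + 𝓕 ⇑f k := by
    have hc : HasFDerivAt (fun y : EuclideanSpace ℝ (Fin m) => y i)
        (EuclideanSpace.proj (𝕜 := ℝ) i) k := (EuclideanSpace.proj (𝕜 := ℝ) i).hasFDerivAt
    have := ((hc.smul hDF).fderiv)
    rw [show (fun y : EuclideanSpace ℝ (Fin m) => (y i) • 𝓕 ⇑f y) = (fun y : EuclideanSpace ℝ (Fin m) => y i) • 𝓕 ⇑f from rfl, this]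
    simp only [ContinuousLinearMap.add_apply, ContinuousLinearMap.coe_smul',
      Pi.smul_apply, ContinuousLinearMap.smulRight_apply]
    rw [hDFe]
    have : (EuclideanSpace.proj (𝕜 := ℝ) i) e = (1:ℝ) := by
      simp [he, EuclideanSpace.single_apply]
    rw [this, one_smul]
  -- put together
  show 𝓕 (⇑(LineDeriv.lineDerivOpCLM ℝ 𝓢(EuclideanSpace ℝ (Fin m), ℂ) e g)) k + (LineDeriv.lineDerivOpCLM ℝ 𝓢(EuclideanSpace ℝ (Fin m), ℂ) e (coordMulCLM m i (fourierTransformCLM ℝ f))) k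
      = 𝓕 ⇑f k
  have hpc2 : (LineDeriv.lineDerivOpCLM ℝ 𝓢(EuclideanSpace ℝ (Fin m), ℂ) e (coordMulCLM m i (fourierTransformCLM ℝ f))) k
      = fderiv ℝ (fun y : EuclideanSpace ℝ (Fin m) => (y i) • 𝓕 ⇑f y) k e := by
    rw [LineDeriv.lineDerivOpCLM_apply, SchwartzMap.lineDerivOp_apply_eq_fderiv]
    congr 1
  rw [hA, hpc2, hB]
  simp only [VectorFourier.fourierSMulRight_apply, ContinuousLinearMap.neg_apply,
    innerSL_apply_apply, EuclideanSpace.inner_single_right, he]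
  simp [real_smul, smul_eq_mul]
  rw [show ((innerSL ℝ) k) (EuclideanSpace.single i (1:ℝ)) = k i by simp [EuclideanSpace.inner_single_right]]
  ring

lemma eulerOp_smul (m : ℕ) (ρ : ℝ) (c : ℝ) (u : 𝓢(EuclideanSpace ℝ (Fin m), ℂ) →L[ℝ] ℂ) :
    eulerOp m ρ (c • u) = c • eulerOp m ρ u := by
  simp only [eulerOp, smul_sub, Finset.smul_sum, ContinuousLinearMap.smul_comp,
    smul_comm ρ c]

lemma euler_fourier (m : ℕ) (ρ : ℝ) (u : 𝓢(EuclideanSpace ℝ (Fin m), ℂ) →L[ℝ] ℂ) :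
    eulerOp m ((m : ℝ) - ρ) (u.comp (fourierTransformCLM ℝ))
      = ((-1 : ℝ) • eulerOp m ρ u).comp (fourierTransformCLM ℝ) := by
  ext f
  simp only [eulerOp, ContinuousLinearMap.coe_comp', Function.comp_apply,
    ContinuousLinearMap.sub_apply, ContinuousLinearMap.smul_apply,
    ContinuousLinearMap.coe_sum', Finset.sum_apply, ContinuousLinearMap.coe_smul',
    Pi.smul_apply]
  have hkey : ∀ i : Fin m,
      u (fourierTransformCLM ℝ (LineDeriv.lineDerivOpCLM ℝ 𝓢(EuclideanSpace ℝ (Fin m), ℂ) (EuclideanSpace.single i (1:ℝ)) (coordMulCLM m i f)))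
      = u (fourierTransformCLM ℝ f)
        - u (LineDeriv.lineDerivOpCLM ℝ 𝓢(EuclideanSpace ℝ (Fin m), ℂ) (EuclideanSpace.single i (1:ℝ))
            (coordMulCLM m i (fourierTransformCLM ℝ f))) := by
    intro i
    rw [← map_sub]
    exact congrArg u (eq_sub_of_add_eq (key m i f))
  rw [Finset.sum_congr rfl fun i _ => hkey i]
  rw [Finset.sum_sub_distrib, Finset.sum_const, Finset.card_univ, Fintype.card_fin]
  simp only [sub_smul, Complex.real_smul, nsmul_eq_mul, smul_eq_mul]
  push_cast
  ring

lemma iterate_euler (m : ℕ) (ρ : ℝ) (u : 𝓢(EuclideanSpace ℝ (Fin m), ℂ) →L[ℝ] ℂ) (n : ℕ) :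
    (eulerOp m ((m : ℝ) - ρ))^[n] (u.comp (fourierTransformCLM ℝ))
      = (((-1 : ℝ) ^ n • (eulerOp m ρ)^[n] u)).comp (fourierTransformCLM ℝ) := by
  induction n with
  | zero => simp
  | succ n ih =>
    rw [Function.iterate_succ_apply', ih, Function.iterate_succ_apply']
    rw [ContinuousLinearMap.smul_comp, eulerOp_smul, euler_fourier,
      ContinuousLinearMap.smul_comp, smul_smul, ContinuousLinearMap.smul_comp]
    norm_num [pow_succ]


set_option synthInstance.maxHeartbeats 1000000 in
/-- If `S_ρ^N u = 0` with `N ≥ 1`, then the Fourier transform `û = u ∘ 𝓕` satisfies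
`S_{m−ρ}^N û = 0`. -/
theorem fourierTransform_almost_homogeneous (m : ℕ) (ρ : ℝ) (N : ℕ) (hN : 1 ≤ N)
    (u : 𝓢(EuclideanSpace ℝ (Fin m), ℂ) →L[ℝ] ℂ)
    (hu : (eulerOp m ρ)^[N] u = 0) :
    (eulerOp m ((m : ℝ) - ρ))^[N] (u.comp (SchwartzMap.fourierTransformCLM ℝ)) = 0 := by
  rw [iterate_euler, hu]
  ext f
  simp

end
end

section
/- Let m ∈ ℕ, N ≥ 1, and ρ ∈ ℝ be such that M := ρ − m is a nonnegative integer. Let u be a tempered distribution on ℝ^m such that S_ρ^N u = Σ_{|α| ≤ M} c^α ∂^α δ₀ for some complex constants c^α. Define the modified distribution u' = u − Σ_{|α| ≤ M−1} (c^α / (M − |α|)^N) ∂^α δ₀. Then S_ρ^{N+1} u' = 0, i.e. u' scales almost homogeneously with degree ρ. -/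
set_option synthInstance.maxHeartbeats 1000000
set_option maxHeartbeats 1000000
set_option linter.unusedVariables false


/-!
STATEMENT 4: If `S_ρ^N u = Σ_{|α| ≤ M} c^α ∂^α δ₀` with `M = ρ − m` a nonnegative integer,
then `u' = u − Σ_{|α| ≤ M−1} (c^α/(M−|α|)^N) ∂^α δ₀` satisfies `S_ρ^{N+1} u' = 0`.
-/

open SchwartzMap

noncomputable section

/-- The iterated partial derivative `∂^α` (for a multi-index `α : Fin m → ℕ`) as a
continuous linear map on Schwartz space. -/
def multiPDeriv (m : ℕ) (α : Fin m → ℕ) :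
    𝓢(EuclideanSpace ℝ (Fin m), ℂ) →L[ℝ] 𝓢(EuclideanSpace ℝ (Fin m), ℂ) :=
  (List.ofFn fun i : Fin m =>
    (LineDeriv.lineDerivOpCLM ℝ 𝓢(EuclideanSpace ℝ (Fin m), ℂ) (EuclideanSpace.single i (1 : ℝ))) ^ (α i)).prod

/-- The tempered distribution `∂^α δ₀ : f ↦ (−1)^{|α|} (∂^α f)(0)`. -/
def deltaDeriv (m : ℕ) (α : Fin m → ℕ) :
    𝓢(EuclideanSpace ℝ (Fin m), ℂ) →L[ℝ] ℂ :=
  ((-1 : ℂ) ^ (∑ i, α i)) •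
    (((BoundedContinuousFunction.evalCLM ℝ (0 : EuclideanSpace ℝ (Fin m))).comp
      (SchwartzMap.toBoundedContinuousFunctionCLM ℝ (EuclideanSpace ℝ (Fin m)) ℂ)).comp (multiPDeriv m α))

/-- The finite set of multi-indices `α ∈ ℕ^m` with `|α| ≤ M`. -/
def multiIdxLE (m M : ℕ) : Finset (Fin m → ℕ) :=
  (Finset.Icc (0 : Fin m → ℕ) fun _ => M).filter fun α => ∑ i, α i ≤ M

namespace AH

/-! ### Abstract algebra: ordered products of powers in a ring -/

variable {R : Type*} [Ring R]

/-- ordered product of powers -/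
def ppow {m : ℕ} (d : Fin m → R) (a : Fin m → ℕ) : R :=
  (List.ofFn fun j => d j ^ a j).prod

lemma ppow_zero_fn {m : ℕ} (d : Fin m → R) : ppow d (fun _ => 0) = 1 := by
  simp [ppow]

lemma ppow_succ {m : ℕ} (d : Fin (m+1) → R) (a : Fin (m+1) → ℕ) :
    ppow d a = d 0 ^ a 0 * ppow (fun j => d j.succ) (fun j => a j.succ) := by
  simp [ppow, List.ofFn_succ]

lemma commute_ppow {m : ℕ} {d : Fin m → R} {x : R} (h : ∀ j, Commute x (d j))
    (a : Fin m → ℕ) : Commute x (ppow d a) := by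
  apply Commute.list_prod_right
  intro y hy
  obtain ⟨j, rfl⟩ := List.mem_ofFn.1 hy
  exact (h j).pow_right _

lemma ppow_add {m : ℕ} (d : Fin m → R) (hd : ∀ i j, Commute (d i) (d j))
    (a b : Fin m → ℕ) : ppow d (a + b) = ppow d a * ppow d b := by
  induction m with
  | zero => simp [ppow]
  | succ n ih =>
    rw [ppow_succ, ppow_succ d a, ppow_succ d b]
    set Ta := ppow (fun j => d j.succ) (fun j => a j.succ) with hTa
    set Tb := ppow (fun j => d j.succ) (fun j => b j.succ) with hTb
    have htail : ppow (fun j => d j.succ) (fun j => (a + b) j.succ) = Ta * Tb := by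
      have := ih (fun j => d j.succ) (fun i j => hd _ _) (fun j => a j.succ) (fun j => b j.succ)
      exact this
    have hc : Commute (d 0 ^ b 0) Ta :=
      commute_ppow (fun j => (hd 0 j.succ).pow_left _) _
    rw [htail, Pi.add_apply, pow_add, mul_assoc (d 0 ^ a 0) Ta, ← mul_assoc Ta,
      ← hc.eq, mul_assoc (d 0 ^ b 0), ← mul_assoc (d 0 ^ a 0), mul_assoc]

lemma ppow_single {m : ℕ} (d : Fin m → R) (i : Fin m) :
    ppow d (Pi.single i 1) = d i := by
  induction m with
  | zero => exact i.elim0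
  | succ n ih =>
    refine Fin.cases ?_ (fun j => ?_) i
    · rw [ppow_succ]
      have h0 : (Pi.single (0 : Fin (n+1)) 1 : Fin (n+1) → ℕ) 0 = 1 := Pi.single_eq_same _ _
      have htail : (fun j : Fin n => (Pi.single (0 : Fin (n+1)) 1 : Fin (n+1) → ℕ) j.succ)
          = fun _ => 0 := by
        funext j; exact Pi.single_eq_of_ne (Fin.succ_ne_zero j) _
      rw [h0, htail, ppow_zero_fn, pow_one, mul_one]
    · rw [ppow_succ]
      have h0 : (Pi.single (j.succ : Fin (n+1)) 1 : Fin (n+1) → ℕ) 0 = 0 :=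
        Pi.single_eq_of_ne (Fin.succ_ne_zero j).symm _
      have htail : (fun k : Fin n => (Pi.single (j.succ : Fin (n+1)) 1 : Fin (n+1) → ℕ) k.succ)
          = Pi.single j 1 := by
        funext k
        rcases eq_or_ne k j with rfl | hk
        · simp
        · rw [Pi.single_eq_of_ne (fun h => hk (Fin.succ_injective _ h)) _,
            Pi.single_eq_of_ne hk]
      rw [h0, htail, ih (fun k => d k.succ) j, pow_zero, one_mul]

lemma pow_mul_comm_x {e x : R} (h : e * x = x * e + 1) (k : ℕ) :
    e ^ k * x = x * e ^ k + k • e ^ (k - 1) := by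
  induction k with
  | zero => simp
  | succ k ih =>
    have h1 : e ^ (k+1) * x = e ^ k * x * e + e ^ k := by
      rw [pow_succ, mul_assoc, h, mul_add, mul_one, ← mul_assoc]
    rw [h1, ih, add_mul, mul_assoc, ← pow_succ, smul_mul_assoc]
    have h2 : k • (e ^ (k-1) * e) + e ^ k = (k+1) • e ^ (k+1-1) := by
      cases k with
      | zero => simp
      | succ k' => simp [Nat.succ_sub_one, ← pow_succ, succ_nsmul, add_mul, add_assoc, two_mul]
    rw [add_assoc, h2]

lemma ppow_mul_x {m : ℕ} (d : Fin m → R) (x : R) (i : Fin m)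
    (hx : ∀ j, d j * x = x * d j + (if j = i then 1 else 0)) (a : Fin m → ℕ) :
    ppow d a * x = x * ppow d a + (a i) • ppow d (a - Pi.single i 1) := by
  induction m with
  | zero => exact i.elim0
  | succ n ih =>
    revert hx
    induction i using Fin.cases with
    | zero =>
      intro hx0
      have hd0 : d 0 * x = x * d 0 + 1 := by simpa using hx0 0
      have hsucc : ∀ j : Fin n, Commute x (d j.succ) := fun j => by
        have := hx0 j.succ
        simp only [Fin.succ_ne_zero, if_false, add_zero] at this
        exact this.symm
      rw [ppow_succ]
      set T := ppow (fun j => d j.succ) (fun j => a j.succ) with hT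
      have hcT : T * x = x * T := ((commute_ppow hsucc _).symm).eq
      have h1 : (a - Pi.single (0 : Fin (n+1)) 1 : Fin (n+1) → ℕ) 0 = a 0 - 1 := by
        simp [Pi.sub_apply]
      have h2 : (fun j : Fin n => (a - Pi.single (0 : Fin (n+1)) 1 : Fin (n+1) → ℕ) j.succ)
          = fun j => a j.succ := by
        funext j
        simp [Pi.sub_apply, Pi.single_eq_of_ne (Fin.succ_ne_zero j)]
      rw [ppow_succ d (a - Pi.single 0 1), h1, h2, ← hT]
      rw [mul_assoc, hcT, ← mul_assoc, pow_mul_comm_x hd0, add_mul, mul_assoc,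
        smul_mul_assoc]
    | succ i =>
      intro hxs
      have hd0x : Commute (d 0) x := by
        have h := hxs 0
        rwa [if_neg (Fin.succ_ne_zero i).symm, add_zero] at h
      have htl : ∀ k : Fin n, d k.succ * x = x * d k.succ + (if k = i then 1 else 0) := by
        intro k
        have h := hxs k.succ
        simpa only [Fin.succ_inj] using h
      have ihtail := ih (fun k => d k.succ) i htl (fun k => a k.succ)
      rw [ppow_succ]
      set T := ppow (fun k => d k.succ) (fun k => a k.succ) with hT
      have h1 : (a - Pi.single (i.succ : Fin (n+1)) 1 : Fin (n+1) → ℕ) 0 = a 0 := by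
        simp [Pi.sub_apply, Pi.single_eq_of_ne (Fin.succ_ne_zero i).symm]
      have h2 : (fun k : Fin n => (a - Pi.single (i.succ : Fin (n+1)) 1 : Fin (n+1) → ℕ) k.succ)
          = (fun k => a k.succ) - Pi.single i 1 := by
        funext k
        rcases eq_or_ne k i with rfl | hk
        · simp [Pi.sub_apply]
        · simp [Pi.sub_apply, Pi.single_eq_of_ne hk,
            Pi.single_eq_of_ne (fun h => hk (Fin.succ_injective _ h))]
      rw [ppow_succ d (a - Pi.single i.succ 1), h1, h2]
      rw [mul_assoc, ihtail, mul_add, ← mul_assoc, (hd0x.pow_left (a 0)).eq,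
        mul_smul_comm, mul_assoc]

/-! ### The concrete operators on Schwartz space -/

variable {m : ℕ}

local notation "E" => EuclideanSpace ℝ (Fin m)
local notation "V" => 𝓢(EuclideanSpace ℝ (Fin m), ℂ)

def DD (i : Fin m) : V →L[ℝ] V := LineDeriv.lineDerivOpCLM ℝ V (EuclideanSpace.single i (1 : ℝ))
def XX (i : Fin m) : V →L[ℝ] V := coordMulCLM m i

lemma XX_apply (i : Fin m) (f : V) (x : E) : XX i f x = x i • f x := rfl

lemma DD_apply (i : Fin m) (f : V) (x : E) :
    DD i f x = fderiv ℝ f x (EuclideanSpace.single i (1 : ℝ)) :=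
  SchwartzMap.lineDerivOp_apply_eq_fderiv _ _ _

lemma XX_apply_zero (i : Fin m) (f : V) : XX i f 0 = 0 := by
  rw [XX_apply]
  norm_num

lemma DX_comm (j i : Fin m) :
    DD j * XX i = XX i * DD j + (if j = i then 1 else 0) := by
  ext f x
  have hco : ⇑(XX i f) = fun y : E => y i • f y := by
    funext y; exact XX_apply i f y
  have hproj : DifferentiableAt ℝ (fun y : E => y i) x :=
    (EuclideanSpace.proj (𝕜 := ℝ) i).differentiableAt
  have hfp : fderiv ℝ (fun y : E => y i) x = EuclideanSpace.proj (𝕜 := ℝ) i :=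
    (EuclideanSpace.proj (𝕜 := ℝ) i).fderiv
  have key : fderiv ℝ (⇑(XX i f)) x = x i • fderiv ℝ f x +
      (fderiv ℝ (fun y : E => y i) x).smulRight (f x) := by
    rw [hco]
    exact fderiv_smul hproj f.differentiableAt
  have hsingle : (EuclideanSpace.single j (1:ℝ)) i = if i = j then 1 else 0 :=
    EuclideanSpace.single_apply j 1 i
  simp only [ContinuousLinearMap.mul_apply, ContinuousLinearMap.add_apply,
    ContinuousLinearMap.one_apply, ContinuousLinearMap.zero_apply]
  rw [DD_apply, key]
  simp only [ContinuousLinearMap.add_apply, ContinuousLinearMap.smul_apply,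
    ContinuousLinearMap.smulRight_apply, hfp, PiLp.proj_apply, hsingle]
  rw [XX_apply, DD_apply]
  rcases eq_or_ne j i with rfl | hji
  · simp
  · simp [hji, Ne.symm hji]

lemma fderiv_fderiv_apply (f : V) (x v w : E) :
    fderiv ℝ (fun y : E => fderiv ℝ f y w) x v = fderiv ℝ (fderiv ℝ f) x v w := by
  have hc : DifferentiableAt ℝ (fderiv ℝ f) x :=
    ((f.smooth ⊤).fderiv_right (m := 1) (by norm_cast)).differentiable (by norm_num)
      |>.differentiableAt
  rw [fderiv_clm_apply hc (differentiableAt_const w)]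
  simp

lemma DD_comm (i j : Fin m) : Commute (DD i : V →L[ℝ] V) (DD j) := by
  have hsym : ∀ (f : V) (x v w : E),
      fderiv ℝ (fderiv ℝ f) x v w = fderiv ℝ (fderiv ℝ f) x w v := by
    intro f x v w
    exact ((f.smooth 2).contDiffAt.isSymmSndFDerivAt (by norm_num)) v w
  ext f x
  simp only [ContinuousLinearMap.mul_apply]
  have hcoe : ∀ (k : Fin m) (g : V), ⇑(DD k g) =
      fun y : E => fderiv ℝ g y (EuclideanSpace.single k (1:ℝ)) := by
    intro k g; funext y; exact DD_apply k g y
  rw [DD_apply, DD_apply, hcoe, hcoe, fderiv_fderiv_apply, fderiv_fderiv_apply, hsym]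

lemma multiPDeriv_eq (a : Fin m → ℕ) : multiPDeriv m a = ppow DD a := rfl

/-- when `a i ≥ 1`, `(a i) • (∂^{a-e_i} ∘ ∂_i) = (a i) • ∂^a`. -/
lemma ppow_sub_mul (a : Fin m → ℕ) (i : Fin m) :
    (a i) • (ppow DD (a - Pi.single i 1) * DD i) = (a i) • ppow (DD : Fin m → V →L[ℝ] V) a := by
  rcases Nat.eq_zero_or_pos (a i) with h0 | hpos
  · rw [h0]; simp
  · congr 1
    have : (a - Pi.single i 1) + Pi.single i 1 = a := by
      funext j
      simp only [Pi.add_apply, Pi.sub_apply]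
      rcases eq_or_ne j i with rfl | hj
      · rw [Pi.single_eq_same]; omega
      · rw [Pi.single_eq_of_ne hj]; omega
    rw [← ppow_single DD i, ← ppow_add DD DD_comm, this]

/-- the operator `A = ρ·1 − Σ_i ∂_i ∘ x_i` on Schwartz space. -/
def AOp (m : ℕ) (ρ : ℝ) : 𝓢(EuclideanSpace ℝ (Fin m), ℂ) →L[ℝ] 𝓢(EuclideanSpace ℝ (Fin m), ℂ) :=
  ρ • (1 : 𝓢(EuclideanSpace ℝ (Fin m), ℂ) →L[ℝ] 𝓢(EuclideanSpace ℝ (Fin m), ℂ))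
    - ∑ i : Fin m, DD i * XX i

lemma eulerOp_eq (ρ : ℝ) (u : 𝓢(EuclideanSpace ℝ (Fin m), ℂ) →L[ℝ] ℂ) :
    eulerOp m ρ u = u.comp (AOp m ρ) := by
  ext f
  simp [eulerOp, AOp, DD, XX, ContinuousLinearMap.mul_apply, map_sub, map_smul,
    ContinuousLinearMap.sum_apply, map_sum, sub_apply]

lemma iter_eulerOp (ρ : ℝ) (u : 𝓢(EuclideanSpace ℝ (Fin m), ℂ) →L[ℝ] ℂ) (k : ℕ) :
    (eulerOp m ρ)^[k] u = u.comp ((AOp m ρ) ^ k) := by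
  induction k with
  | zero => ext f; simp
  | succ k ih =>
    rw [Function.iterate_succ_apply', ih, eulerOp_eq, ContinuousLinearMap.comp_assoc,
      ← ContinuousLinearMap.mul_def, ← pow_succ]

def delta0 (m : ℕ) : 𝓢(EuclideanSpace ℝ (Fin m), ℂ) →L[ℝ] ℂ :=
  (BoundedContinuousFunction.evalCLM ℝ (0 : EuclideanSpace ℝ (Fin m))).comp
    (SchwartzMap.toBoundedContinuousFunctionCLM ℝ (EuclideanSpace ℝ (Fin m)) ℂ)

/-- THE key computation: `(δ₀ ∘ ∂^a) ∘ A = (ρ − m − |a|) (δ₀ ∘ ∂^a)`. -/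
lemma key (ρ : ℝ) (a : Fin m → ℕ) :
    ((delta0 m).comp (multiPDeriv m a)).comp (AOp m ρ)
      = (ρ - ((m : ℝ) + (∑ i, a i : ℕ))) • ((delta0 m).comp (multiPDeriv m a)) := by
  have hterm : ∀ i : Fin m, ppow DD a * (DD i * XX i)
      = XX i * (ppow DD a * DD i) + ((a i) • ppow DD a + ppow (DD : Fin m → _) a) := by
    intro i
    have h1 : DD i * XX i = XX i * DD i + 1 := by
      have := DX_comm i i
      simpa using this
    have h2 : ppow DD a * XX i
        = XX i * ppow DD a + (a i) • ppow DD (a - Pi.single i 1) :=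
      ppow_mul_x DD (XX i) i (fun j => DX_comm j i) a
    calc ppow DD a * (DD i * XX i) = ppow DD a * (XX i * DD i) + ppow DD a := by
          rw [h1, mul_add, mul_one]
      _ = (ppow DD a * XX i) * DD i + ppow DD a := by rw [mul_assoc]
      _ = XX i * (ppow DD a * DD i) + ((a i) • (ppow DD (a - Pi.single i 1) * DD i)
            + ppow DD a) := by
          rw [h2, add_mul, smul_mul_assoc, mul_assoc, add_assoc]
      _ = XX i * (ppow DD a * DD i) + ((a i) • ppow DD a + ppow DD a) := by
          rw [ppow_sub_mul]
  have hPA : multiPDeriv m a * AOp m ρ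
      = ρ • multiPDeriv m a - (∑ i : Fin m, XX i * (ppow DD a * DD i))
        - (((∑ i, a i) • multiPDeriv m a) + m • multiPDeriv m a) := by
    rw [multiPDeriv_eq, AOp, mul_sub, mul_smul_comm, mul_one, Finset.mul_sum]
    rw [Finset.sum_congr rfl (fun i _ => hterm i)]
    rw [Finset.sum_add_distrib, Finset.sum_add_distrib, ← Finset.sum_smul,
      Finset.sum_const, Finset.card_univ, Fintype.card_fin]
    abel
  ext f
  have happ : multiPDeriv m a (AOp m ρ f) = (multiPDeriv m a * AOp m ρ) f := rfl
  simp only [ContinuousLinearMap.comp_apply, ContinuousLinearMap.smul_apply]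
  rw [happ, hPA]
  simp only [ContinuousLinearMap.sub_apply, ContinuousLinearMap.add_apply,
    ContinuousLinearMap.smul_apply, ContinuousLinearMap.sum_apply,
    ContinuousLinearMap.mul_apply, map_sub, map_add, map_smul, map_nsmul, map_sum]
  have hzero : ∀ i : Fin m, delta0 m (XX i (ppow DD a (DD i f))) = 0 := by
    intro i
    show (XX i (ppow DD a (DD i f))) 0 = 0
    exact XX_apply_zero _ _
  rw [Finset.sum_congr rfl (fun i _ => hzero i), Finset.sum_const_zero]
  set z := delta0 m (multiPDeriv m a f)
  push_cast
  simp only [nsmul_eq_mul, Complex.real_smul]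
  push_cast
  ring

lemma delta0_eq : delta0 m = (BoundedContinuousFunction.evalCLM ℝ (0 : EuclideanSpace ℝ (Fin m))).comp
    (SchwartzMap.toBoundedContinuousFunctionCLM ℝ (EuclideanSpace ℝ (Fin m)) ℂ) := rfl

lemma real_smul_eq (r : ℝ) (v : 𝓢(EuclideanSpace ℝ (Fin m), ℂ) →L[ℝ] ℂ) :
    r • v = (r : ℂ) • v := by
  ext f
  simp [Complex.real_smul]

lemma euler_deltaDeriv (ρ : ℝ) (a : Fin m → ℕ) :
    eulerOp m ρ (deltaDeriv m a)
      = (ρ - ((m : ℝ) + (∑ i, a i : ℕ))) • deltaDeriv m a := by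
  rw [eulerOp_eq, deltaDeriv, ContinuousLinearMap.smul_comp, ← delta0_eq, key, smul_comm]

lemma euler_rsmul (ρ : ℝ) (r : ℝ) (v : 𝓢(EuclideanSpace ℝ (Fin m), ℂ) →L[ℝ] ℂ) :
    eulerOp m ρ (r • v) = r • eulerOp m ρ v := by
  rw [eulerOp_eq, eulerOp_eq, ContinuousLinearMap.smul_comp]

lemma iter_csmul (ρ : ℝ) (k : ℕ) (z : ℂ) (v : 𝓢(EuclideanSpace ℝ (Fin m), ℂ) →L[ℝ] ℂ) :
    (eulerOp m ρ)^[k] (z • v) = z • (eulerOp m ρ)^[k] v := by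
  simp only [iter_eulerOp, ContinuousLinearMap.smul_comp]

lemma iter_rsmul (ρ : ℝ) (k : ℕ) (r : ℝ) (v : 𝓢(EuclideanSpace ℝ (Fin m), ℂ) →L[ℝ] ℂ) :
    (eulerOp m ρ)^[k] (r • v) = r • (eulerOp m ρ)^[k] v := by
  simp only [iter_eulerOp, ContinuousLinearMap.smul_comp]

lemma iter_sub (ρ : ℝ) (k : ℕ) (u v : 𝓢(EuclideanSpace ℝ (Fin m), ℂ) →L[ℝ] ℂ) :
    (eulerOp m ρ)^[k] (u - v) = (eulerOp m ρ)^[k] u - (eulerOp m ρ)^[k] v := by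
  simp only [iter_eulerOp, ContinuousLinearMap.sub_comp]

lemma iter_sum (ρ : ℝ) (k : ℕ) {ι : Type*} (t : Finset ι)
    (v : ι → (𝓢(EuclideanSpace ℝ (Fin m), ℂ) →L[ℝ] ℂ)) :
    (eulerOp m ρ)^[k] (∑ i ∈ t, v i) = ∑ i ∈ t, (eulerOp m ρ)^[k] (v i) := by
  simp only [iter_eulerOp, ContinuousLinearMap.finset_sum_comp]

lemma iter_deltaDeriv (ρ : ℝ) (a : Fin m → ℕ) (k : ℕ) :
    (eulerOp m ρ)^[k] (deltaDeriv m a)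
      = ((ρ - ((m : ℝ) + (∑ i, a i : ℕ))) ^ k) • deltaDeriv m a := by
  induction k with
  | zero => simp
  | succ k ih =>
    rw [Function.iterate_succ_apply', ih, euler_rsmul, euler_deltaDeriv, smul_smul,
      ← pow_succ]

lemma euler_csmul (ρ : ℝ) (z : ℂ) (v : 𝓢(EuclideanSpace ℝ (Fin m), ℂ) →L[ℝ] ℂ) :
    eulerOp m ρ (z • v) = z • eulerOp m ρ v := by
  rw [eulerOp_eq, eulerOp_eq, ContinuousLinearMap.smul_comp]

lemma euler_sum (ρ : ℝ) {ι : Type*} (t : Finset ι)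
    (v : ι → (𝓢(EuclideanSpace ℝ (Fin m), ℂ) →L[ℝ] ℂ)) :
    eulerOp m ρ (∑ i ∈ t, v i) = ∑ i ∈ t, eulerOp m ρ (v i) := by
  simp only [eulerOp_eq, ContinuousLinearMap.finset_sum_comp]

end AH

/-- If `S_ρ^N u = Σ_{|α| ≤ M} c^α ∂^α δ₀` (with `M = ρ - m ∈ ℕ`, `N ≥ 1`), then the
modified distribution `u' = u − Σ_{|α| < M} (c^α/(M−|α|)^N) ∂^α δ₀` scales almost
homogeneously with degree `ρ`: `S_ρ^{N+1} u' = 0`. -/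
theorem almost_homogeneous_of_modified (m : ℕ) (N : ℕ) (hN : 1 ≤ N) (ρ : ℝ) (M : ℕ)
    (hM : (M : ℝ) = ρ - m)
    (u : 𝓢(EuclideanSpace ℝ (Fin m), ℂ) →L[ℝ] ℂ)
    (c : (Fin m → ℕ) → ℂ)
    (hu : (eulerOp m ρ)^[N] u = ∑ α ∈ multiIdxLE m M, c α • deltaDeriv m α) :
    (eulerOp m ρ)^[N + 1]
      (u - ∑ α ∈ (multiIdxLE m M).filter (fun α => ∑ i, α i < M),
        (c α / ((M : ℂ) - (∑ i, α i : ℕ)) ^ N) • deltaDeriv m α) = 0 := by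
  classical
  have hρ : ρ = (M : ℝ) + m := by linarith
  have hcorr : (eulerOp m ρ)^[N]
      (∑ α ∈ (multiIdxLE m M).filter (fun α => ∑ i, α i < M),
        (c α / ((M : ℂ) - (∑ i, α i : ℕ)) ^ N) • deltaDeriv m α)
      = ∑ α ∈ (multiIdxLE m M).filter (fun α => ∑ i, α i < M), c α • deltaDeriv m α := by
    rw [AH.iter_sum]
    refine Finset.sum_congr rfl (fun α hα => ?_)
    have hlt : ∑ i, α i < M := (Finset.mem_filter.1 hα).2
    rw [AH.iter_csmul, AH.iter_deltaDeriv]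
    have h1 : ρ - ((m : ℝ) + (∑ i, α i : ℕ)) = (M : ℝ) - (∑ i, α i : ℕ) := by
      rw [hρ]; ring
    rw [h1, AH.real_smul_eq, smul_smul]
    have hz : ((M : ℂ) - ((∑ i, α i : ℕ) : ℂ)) ≠ 0 := by
      refine sub_ne_zero_of_ne ?_
      exact_mod_cast Nat.ne_of_gt hlt
    have hcast : ((((M : ℝ) - (∑ i, α i : ℕ)) ^ N : ℝ) : ℂ)
        = ((M : ℂ) - ((∑ i, α i : ℕ) : ℂ)) ^ N := by
      push_cast; ring
    rw [hcast, div_mul_cancel₀ _ (pow_ne_zero N hz)]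
  rw [Function.iterate_succ_apply', AH.iter_sub, hu, hcorr]
  have hsplit : (∑ α ∈ multiIdxLE m M, c α • deltaDeriv m α)
      - ∑ α ∈ (multiIdxLE m M).filter (fun α => ∑ i, α i < M), c α • deltaDeriv m α
      = ∑ α ∈ (multiIdxLE m M).filter (fun α => ¬ ∑ i, α i < M), c α • deltaDeriv m α := by
    rw [← Finset.sum_filter_add_sum_filter_not (multiIdxLE m M) (fun α => ∑ i, α i < M)
      (fun α => c α • deltaDeriv m α)]
    rw [add_sub_cancel_left]
  rw [hsplit, AH.euler_sum]
  refine Finset.sum_eq_zero (fun α hα => ?_)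
  obtain ⟨hin, hnlt⟩ := Finset.mem_filter.1 hα
  have hle : ∑ i, α i ≤ M := (Finset.mem_filter.1 hin).2
  have heq : (∑ i, α i) = M := le_antisymm hle (not_lt.1 hnlt)
  rw [AH.euler_csmul, AH.euler_deltaDeriv]
  have h0 : ρ - ((m : ℝ) + (∑ i, α i : ℕ)) = 0 := by rw [heq, hρ]; ring
  rw [h0]
  ext f
  simp

end
end
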